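/- Let F be a generalized fighting fish and let F = u·v be any factorization of F into two words. Suppose p·s is a prefix of v, where s is a single letter, such that every prefix q of p satisfies lat(u·q) ≥ lat(u) and long(u·q) ≥ long(u), but lat(u·p·s) < lat(u) or long(u·p·s) < long(u). Then either s = W, or s = S with lat(u·p) = lat(u) and long(u·p) = long(u). (In other words, the suffix walk v either remains in the tilted upper-right quarter plane with origin at the endpoint P of u, or first exits it through its upper side: by a W step, or by an S step taken at P itself.) -/

import Mathlib

/-- The four-letter alphabet of steps. -/
inductive Letter : Type
  | E | N | W | S
deriving DecidableEq, Repr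

open Letter

/-- Fighting fish: words obtainable from `ENWS` by upper, lower and double gluings. -/
inductive IsFF : List Letter → Prop
  | base : IsFF [E, N, W, S]
  | upper (u v : List Letter) :
      IsFF (u ++ [W] ++ v) → IsFF (u ++ [N, W, S] ++ v)
  | lower (u v : List Letter) :
      IsFF (u ++ [N] ++ v) → IsFF (u ++ [E, N, W] ++ v)
  | double (u v : List Letter) :
      IsFF (u ++ [W, N] ++ v) → IsFF (u ++ [N, W] ++ v)

/-- Generalized fighting fish: words obtainable from the empty word by the
operations `∇_k` (replace `N^k` by `E N^k W`) and `△_k` (replace `W^k` by `N W^k S`),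
for `k ≥ 0`. -/
inductive IsGFF : List Letter → Prop
  | base : IsGFF []
  | nabla (u v : List Letter) (k : ℕ) :
      IsGFF (u ++ List.replicate k N ++ v) →
      IsGFF (u ++ [E] ++ List.replicate k N ++ [W] ++ v)
  | delta (u v : List Letter) (k : ℕ) :
      IsGFF (u ++ List.replicate k W ++ v) →
      IsGFF (u ++ [N] ++ List.replicate k W ++ [S] ++ v)

/-- The latitude of a word: number of `N`'s minus number of `S`'s. -/
def lat (w : List Letter) : ℤ := (w.count N : ℤ) - (w.count S : ℤ)

/-- The longitude of a word: number of `E`'s minus number of `W`'s. -/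
def long (w : List Letter) : ℤ := (w.count E : ℤ) - (w.count W : ℤ)

/-- The size of a word: half its length. -/
def size (w : List Letter) : ℕ := w.length / 2

@[simp] lemma lat_nil : lat [] = 0 := rfl
@[simp] lemma long_nil : long [] = 0 := rfl
@[simp] lemma lat_append (a b : List Letter) : lat (a ++ b) = lat a + lat b := by
  simp [lat, List.count_append]; ring
@[simp] lemma long_append (a b : List Letter) : long (a ++ b) = long a + long b := by
  simp [long, List.count_append]; ring
@[simp] lemma lat_cons (x : Letter) (w : List Letter) :
    lat (x :: w) = (match x with | N => 1 | S => -1 | _ => 0) + lat w := by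
  cases x <;> simp [lat, List.count_cons] <;> ring
@[simp] lemma long_cons (x : Letter) (w : List Letter) :
    long (x :: w) = (match x with | E => 1 | W => -1 | _ => 0) + long w := by
  cases x <;> simp [long, List.count_cons] <;> ring
@[simp] lemma lat_repN (k : ℕ) : lat (List.replicate k N) = k := by
  simp [lat, List.count_replicate]
@[simp] lemma long_repN (k : ℕ) : long (List.replicate k N) = 0 := by
  simp [long, List.count_replicate]
@[simp] lemma lat_repW (k : ℕ) : lat (List.replicate k W) = 0 := by
  simp [lat, List.count_replicate]
@[simp] lemma long_repW (k : ℕ) : long (List.replicate k W) = -k := by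
  simp [long, List.count_replicate]

/-- Flatness: every prefix stays in the quarter plane. -/
def Flat (p : List Letter) : Prop := ∀ q, q <+: p → 0 ≤ lat q ∧ 0 ≤ long q

lemma prefix_cases {q a b : List Letter} (h : q <+: a ++ b) :
    q <+: a ∨ ∃ r, r <+: b ∧ q = a ++ r := by
  induction a generalizing q with
  | nil => exact Or.inr ⟨q, h, rfl⟩
  | cons x a ih =>
    cases q with
    | nil => exact Or.inl (List.nil_prefix)
    | cons y q =>
      rw [List.cons_append, List.cons_prefix_cons] at h
      obtain ⟨rfl, h⟩ := h
      rcases ih h with h' | ⟨r, hr, rfl⟩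
      · exact Or.inl (List.cons_prefix_cons.mpr ⟨rfl, h'⟩)
      · exact Or.inr ⟨r, hr, rfl⟩

lemma suffix_replicate {t g : List Letter} {k : ℕ} {c : Letter}
    (h : List.replicate k c = t ++ g) : ∃ m, m ≤ k ∧ g = List.replicate m c := by
  refine ⟨g.length, ?_, ?_⟩
  · have := congrArg List.length h
    simp at this; omega
  · exact List.eq_replicate_of_mem (fun b hb => List.eq_of_mem_replicate
      (h ▸ (List.mem_append_right t hb)))

lemma prefix_replicate {g : List Letter} {k : ℕ} {c : Letter}
    (h : g <+: List.replicate k c) : ∃ m, m ≤ k ∧ g = List.replicate m c := by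
  obtain ⟨t, ht⟩ := h
  refine ⟨g.length, ?_, ?_⟩
  · have := congrArg List.length ht; simp at this; omega
  · exact List.eq_replicate_of_mem (fun b hb => List.eq_of_mem_replicate
      (ht ▸ (List.mem_append_left t hb)))

lemma replicate_prefix_replicate {m k : ℕ} {c : Letter} (h : m ≤ k) :
    List.replicate m c <+: List.replicate k c :=
  ⟨List.replicate (k - m) c, by rw [← List.replicate_add]; congr 1; omega⟩

/-- Locate a letter `s` which does not occur in the block `b`. -/
lemma locate {b v z y : List Letter} {s : Letter} (hs : s ∉ b)
    (h : b ++ v = z ++ s :: y) : ∃ t, z = b ++ t ∧ v = t ++ s :: y := by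
  rcases List.append_eq_append_iff.mp h with ⟨t, rfl, hv⟩ | ⟨r, rfl, hr⟩
  · exact ⟨t, rfl, hv⟩
  · cases r with
    | nil => exact ⟨[], by simp, by simpa using hr.symm⟩
    | cons x r =>
      obtain ⟨rfl, -⟩ := List.cons_eq_cons.mp hr.symm
      exact absurd (List.mem_append_right z List.mem_cons_self) hs

lemma flat_no_W_close {m : ℕ} {z p : List Letter}
    (hp : p = (List.replicate m N ++ [W]) ++ z) (hf : Flat p) : False := by
  have := (hf _ ⟨z, hp.symm⟩).2
  simp at this

lemma flat_no_S_head {z p : List Letter} (hp : p = S :: z) (hf : Flat p) : False := by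
  have := (hf [S] ⟨z, hp.symm⟩).1
  simp [lat] at this

lemma flat_no_W_head {z p : List Letter} (hp : p = W :: z) (hf : Flat p) : False := by
  have := (hf [W] ⟨z, hp.symm⟩).2
  simp [long] at this

/-- Surgery for the nabla case: removing an inserted `E…W` block keeps flatness. -/
lemma flat_nabla {p1 p2 : List Letter} {k : ℕ}
    (hf : Flat (p1 ++ (E :: (List.replicate k N ++ [W])) ++ p2)) :
    Flat (p1 ++ List.replicate k N ++ p2) := by
  intro q hq
  rw [List.append_assoc] at hq
  rcases prefix_cases hq with h1 | ⟨r, hr, rfl⟩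
  · exact hf q (h1.trans (by simp only [List.append_assoc]; exact List.prefix_append _ _))
  rcases prefix_cases hr with h2 | ⟨r2, hr2, rfl⟩
  · obtain ⟨m, hm, rfl⟩ := prefix_replicate h2
    have hq1 := hf (p1 ++ (E :: List.replicate m N))
      (by simp only [List.append_assoc]
          refine (List.prefix_append_right_inj p1).mpr ?_
          refine List.cons_prefix_cons.mpr ⟨rfl, ?_⟩
          exact (replicate_prefix_replicate hm).trans ⟨[W] ++ p2, by simp⟩)
    have hq2 := hf p1 (by simp only [List.append_assoc]; exact List.prefix_append _ _)
    constructor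
    · have := hq1.1; simpa using this
    · have := hq2.2; simpa using this
  · have hQ := hf (p1 ++ (E :: (List.replicate k N ++ [W])) ++ r2)
      (by simp only [List.append_assoc]
          exact (List.prefix_append_right_inj _).mpr
            ((List.prefix_append_right_inj _).mpr hr2))
    constructor
    · have := hQ.1; simp at this ⊢; linarith
    · have := hQ.2; simp at this ⊢; linarith

/-- Surgery for the delta case: removing an inserted `N…S` block keeps flatness. -/
lemma flat_delta {p1 p2 : List Letter} {k : ℕ}
    (hf : Flat (p1 ++ (N :: (List.replicate k W ++ [S])) ++ p2)) :
    Flat (p1 ++ List.replicate k W ++ p2) := by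
  intro q hq
  rw [List.append_assoc] at hq
  rcases prefix_cases hq with h1 | ⟨r, hr, rfl⟩
  · exact hf q (h1.trans (by simp only [List.append_assoc]; exact List.prefix_append _ _))
  rcases prefix_cases hr with h2 | ⟨r2, hr2, rfl⟩
  · obtain ⟨m, hm, rfl⟩ := prefix_replicate h2
    have hq1 := hf (p1 ++ (N :: List.replicate m W))
      (by simp only [List.append_assoc]
          refine (List.prefix_append_right_inj p1).mpr ?_
          refine List.cons_prefix_cons.mpr ⟨rfl, ?_⟩
          exact (replicate_prefix_replicate hm).trans ⟨[S] ++ p2, by simp⟩)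
    have hq2 := hf p1 (by simp only [List.append_assoc]; exact List.prefix_append _ _)
    constructor
    · have := hq2.1; simpa using this
    · have := hq1.2; simp at this ⊢; linarith
  · have hQ := hf (p1 ++ (N :: (List.replicate k W ++ [S])) ++ r2)
      (by simp only [List.append_assoc]
          exact (List.prefix_append_right_inj _).mpr
            ((List.prefix_append_right_inj _).mpr hr2))
    constructor
    · have := hQ.1; simp at this ⊢; linarith
    · have := hQ.2; simp at this ⊢; linarith

lemma EB_suffix {t a : List Letter} {k : ℕ}
    (h : E :: (List.replicate k N ++ [W]) = t ++ a) :
    (t = [] ∧ a = E :: (List.replicate k N ++ [W])) ∨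
    (∃ m, m ≤ k ∧ a = List.replicate m N ++ [W]) ∨ a = [] := by
  cases t with
  | nil => exact Or.inl ⟨rfl, by simpa using h.symm⟩
  | cons x t =>
    simp only [List.cons_append] at h
    obtain ⟨he, h3⟩ := List.cons_eq_cons.mp h
    rcases List.append_eq_append_iff.mp h3 with ⟨g, hg, hWa⟩ | ⟨g, hg, rfl⟩
    · cases g with
      | nil => exact Or.inr (Or.inl ⟨0, by simp, by simpa using hWa.symm⟩)
      | cons z g =>
        have hlen := congrArg List.length hWa
        simp only [List.length_cons, List.length_append, List.length_singleton, List.length_nil] at hlen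
        exact Or.inr (Or.inr (List.eq_nil_of_length_eq_zero (by omega)))
    · obtain ⟨m, hm, rfl⟩ := suffix_replicate hg
      exact Or.inr (Or.inl ⟨m, hm, rfl⟩)

lemma NB_suffix {t a : List Letter} {k : ℕ}
    (h : N :: List.replicate k W = t ++ a) :
    (t = [] ∧ a = N :: List.replicate k W) ∨ ∃ m, m ≤ k ∧ a = List.replicate m W := by
  cases t with
  | nil => exact Or.inl ⟨rfl, by simpa using h.symm⟩
  | cons x t =>
    simp only [List.cons_append] at h
    obtain ⟨he, h3⟩ := List.cons_eq_cons.mp h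
    exact Or.inr (suffix_replicate h3)

lemma key {w : List Letter} (h : IsGFF w) :
    ∀ x p y, w = x ++ p ++ S :: y → Flat p → lat p = 0 → long p = 0 := by
  induction h with
  | base =>
    intro x p y heq _ _
    have := congrArg List.length heq; simp at this
  | nabla u v k h ih =>
    intro x p y heq hf hl
    simp only [List.append_assoc, List.cons_append, List.singleton_append,
      List.nil_append] at heq
    rcases List.append_eq_append_iff.mp heq with ⟨t, rfl, h2⟩ | ⟨c, rfl, h2⟩
    · -- x = u ++ t
      have h2' : (E :: (List.replicate k N ++ [W])) ++ v = (t ++ p) ++ (S :: y) := by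
        simp only [List.append_assoc, List.cons_append, List.singleton_append,
          List.nil_append]
        exact h2
      obtain ⟨z2, hz, hv⟩ := locate (by simp [List.mem_replicate]) h2'
      rcases List.append_eq_append_iff.mp hz with ⟨a, hBa, hp⟩ | ⟨c', rfl, rfl⟩
      · rcases EB_suffix hBa with ⟨rfl, rfl⟩ | ⟨m, hm, rfl⟩ | rfl
        · -- p = B ++ z2 : surgery with p1 = []
          have hfshape : ([] ++ (E :: (List.replicate k N ++ [W])) ++ z2) = p := by
            simp only [List.nil_append]; exact hp.symm
          have hf' := flat_nabla (p1 := []) (p2 := z2) (k := k) (hfshape ▸ hf)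
          have hl' : lat ([] ++ List.replicate k N ++ z2) = 0 := by
            rw [hp] at hl; simp at hl ⊢; linarith
          have := ih u ([] ++ List.replicate k N ++ z2) y
            (by rw [hv]; simp [List.append_assoc]) hf' hl'
          rw [hp]; simp at this ⊢; linarith
        · exact (flat_no_W_close hp hf).elim
        · -- a = [], t = B, p = z2
          rw [List.nil_append] at hp
          have ht : t = E :: (List.replicate k N ++ [W]) := by simpa using hBa.symm
          subst ht hp
          exact ih (u ++ List.replicate k N) p y
            (by rw [hv]; simp [List.append_assoc]) hf hl
      · -- t = B ++ c', z2 = c' ++ p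
        exact ih (u ++ List.replicate k N ++ c') p y
          (by rw [hv]; simp [List.append_assoc]) hf hl
    · -- u = x ++ c
      rcases List.append_eq_append_iff.mp h2 with ⟨a, hca, hsy⟩ | ⟨a, hpa, hM⟩
      · cases a with
        | nil => simp at hsy
        | cons s' a' =>
          obtain ⟨rfl, rfl⟩ := List.cons_eq_cons.mp hsy
          subst hca
          exact ih x p (a' ++ (List.replicate k N ++ v))
            (by simp [List.append_assoc]) hf hl
      · have hM' : (E :: (List.replicate k N ++ [W])) ++ v = a ++ (S :: y) := by
          simp only [List.append_assoc, List.cons_append, List.singleton_append,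
            List.nil_append]
          exact hM
        obtain ⟨z2, rfl, hv⟩ := locate (by simp [List.mem_replicate]) hM'
        -- p = c ++ B ++ z2 : surgery
        have hfshape : (c ++ (E :: (List.replicate k N ++ [W])) ++ z2) = p := by
          simp [hpa, List.append_assoc]
        have hf' := flat_nabla (p1 := c) (p2 := z2) (k := k) (hfshape ▸ hf)
        have hl' : lat (c ++ List.replicate k N ++ z2) = 0 := by
          rw [hpa] at hl; simp at hl ⊢; linarith
        have := ih x (c ++ List.replicate k N ++ z2) y
          (by rw [hv]; simp [List.append_assoc]) hf' hl'
        rw [hpa]; simp at this ⊢; linarith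
  | delta u v k h ih =>
    intro x p y heq hf hl
    simp only [List.append_assoc, List.cons_append, List.singleton_append,
      List.nil_append] at heq
    rcases List.append_eq_append_iff.mp heq with ⟨t, rfl, h2⟩ | ⟨c, rfl, h2⟩
    · -- x = u ++ t
      have h2' : (N :: List.replicate k W) ++ (S :: v) = (t ++ p) ++ (S :: y) := by
        simp only [List.append_assoc, List.cons_append, List.singleton_append,
          List.nil_append]
        exact h2
      have hAnil : t ++ p = N :: List.replicate k W → long p = 0 := by
        intro hta
        rcases NB_suffix hta.symm with ⟨rfl, hp⟩ | ⟨m, hm, hp⟩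
        · rw [hp] at hl; simp at hl
        · have h0 := (hf p List.prefix_rfl).2
          rw [hp] at h0 ⊢; simp at h0 ⊢; omega
      rcases List.append_eq_append_iff.mp h2' with ⟨a, hta, hsv⟩ | ⟨a, hB, hsy⟩
      · cases a with
        | nil =>
          rw [List.append_nil] at hta
          exact hAnil hta
        | cons s' a' =>
          obtain ⟨rfl, hv⟩ := List.cons_eq_cons.mp hsv
          have hta' : t ++ p = (N :: List.replicate k W) ++ (S :: a') := by
            simpa [List.append_assoc] using hta
          rcases List.append_eq_append_iff.mp hta' with ⟨g, hNg, hp⟩ | ⟨g, ht, hsa⟩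
          · rcases NB_suffix hNg with ⟨rfl, rfl⟩ | ⟨m, hm, rfl⟩
            · -- p = (N :: R) ++ S :: a' : surgery with p1 = []
              have hfshape : ([] ++ (N :: (List.replicate k W ++ [S])) ++ a') = p := by
                rw [hp]; simp [List.append_assoc]
              have hf' := flat_delta (p1 := []) (p2 := a') (k := k) (hfshape ▸ hf)
              have hl' : lat ([] ++ List.replicate k W ++ a') = 0 := by
                rw [hp] at hl; simp at hl ⊢; linarith
              have := ih u ([] ++ List.replicate k W ++ a') y
                (by rw [hv]; simp [List.append_assoc]) hf' hl'
              rw [hp]; simp at this ⊢; linarith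
            · cases m with
              | zero => exact (flat_no_S_head (by simpa using hp) hf).elim
              | succ m' =>
                exact (flat_no_W_head (z := List.replicate m' W ++ S :: a')
                  (by rw [hp]; simp [List.replicate_succ]) hf).elim
          · cases g with
            | nil =>
              rw [List.nil_append] at hsa
              exact (flat_no_S_head hsa.symm hf).elim
            | cons s'' g' =>
              obtain ⟨rfl, ha'⟩ := List.cons_eq_cons.mp hsa
              subst ht
              exact ih (u ++ List.replicate k W ++ g') p y
                (by rw [hv, ha']; simp [List.append_assoc]) hf hl
      · cases a with
        | nil =>
          rw [List.append_nil] at hB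
          exact hAnil hB.symm
        | cons s'' a' =>
          obtain ⟨rfl, -⟩ := List.cons_eq_cons.mp hsy
          have : S ∈ N :: List.replicate k W :=
            hB ▸ (List.mem_append_right _ List.mem_cons_self)
          simp [List.mem_replicate] at this
    · -- u = x ++ c
      rcases List.append_eq_append_iff.mp h2 with ⟨a, hca, hsy⟩ | ⟨a, hpa, hM⟩
      · cases a with
        | nil => simp at hsy
        | cons s' a' =>
          obtain ⟨rfl, rfl⟩ := List.cons_eq_cons.mp hsy
          subst hca
          exact ih x p (a' ++ (List.replicate k W ++ v))
            (by simp [List.append_assoc]) hf hl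
      · have hlatc : p = c ++ (N :: List.replicate k W) → long p = 0 := by
          intro hp
          have hc := (hf c ⟨N :: List.replicate k W, hp.symm⟩).1
          rw [hp] at hl; simp at hl; omega
        have hM' : (N :: List.replicate k W) ++ (S :: v) = a ++ (S :: y) := by
          simp only [List.append_assoc, List.cons_append, List.singleton_append,
            List.nil_append]
          exact hM
        rcases List.append_eq_append_iff.mp hM' with ⟨g, ha, hsv⟩ | ⟨g, hNg, hsy2⟩
        · cases g with
          | nil =>
            rw [List.append_nil] at ha
            exact hlatc (by rw [hpa, ha])
          | cons s' g' =>
            obtain ⟨rfl, hv⟩ := List.cons_eq_cons.mp hsv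
            -- p = c ++ (N :: R ++ S :: g') : surgery with p1 = c
            have hfshape : (c ++ (N :: (List.replicate k W ++ [S])) ++ g') = p := by
              rw [hpa, ha]; simp [List.append_assoc]
            have hf' := flat_delta (p1 := c) (p2 := g') (k := k) (hfshape ▸ hf)
            have hl' : lat (c ++ List.replicate k W ++ g') = 0 := by
              rw [hpa, ha] at hl; simp at hl ⊢; linarith
            have := ih x (c ++ List.replicate k W ++ g') y
              (by rw [hv]; simp [List.append_assoc]) hf' hl'
            rw [hpa, ha]; simp at this ⊢; linarith
        · cases g with
          | nil =>
            rw [List.append_nil] at hNg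
            exact hlatc (by rw [hpa, hNg])
          | cons s'' g' =>
            obtain ⟨rfl, -⟩ := List.cons_eq_cons.mp hsy2
            have : S ∈ N :: List.replicate k W :=
              hNg ▸ (List.mem_append_right _ List.mem_cons_self)
            simp [List.mem_replicate] at this

/-- Quadrant property for a factorization `F = u · v` of a generalized fighting
fish: if `p · s` is a prefix of `v` (with `s` a single letter) which is the first
exit of the walk `v` from the tilted upper-right quarter plane with origin at the
endpoint of `u`, then either `s = W`, or `s = S` taken at the origin point itself. -/
theorem gff_exit_upper_side (u v p : List Letter) (s : Letter)
    (hF : IsGFF (u ++ v)) (hpre : (p ++ [s]) <+: v)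
    (hin : ∀ q : List Letter, q <+: p →
      lat u ≤ lat (u ++ q) ∧ long u ≤ long (u ++ q))
    (hout : lat (u ++ p ++ [s]) < lat u ∨ long (u ++ p ++ [s]) < long u) :
    s = W ∨ (s = S ∧ lat (u ++ p) = lat u ∧ long (u ++ p) = long u) := by
  have hflat : Flat p := by
    intro q hq
    have h1 := hin q hq
    simp only [lat_append, long_append] at h1
    omega
  have hp0 := hin p List.prefix_rfl
  simp only [lat_append, long_append] at hp0
  cases s with
  | E => simp only [lat_append, long_append, lat_cons, long_cons, lat_nil, long_nil,
           List.append_assoc] at hout; omega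
  | N => simp only [lat_append, long_append, lat_cons, long_cons, lat_nil, long_nil,
           List.append_assoc] at hout; omega
  | W => exact Or.inl rfl
  | S =>
    have hlatp : lat p = 0 := by
      simp only [lat_append, long_append, lat_cons, long_cons, lat_nil, long_nil,
        List.append_assoc] at hout
      omega
    obtain ⟨y, hy⟩ := hpre
    have hlongp : long p = 0 := by
      refine key hF u p y ?_ hflat hlatp
      rw [← hy]
      simp [List.append_assoc]
    refine Or.inr ⟨rfl, ?_, ?_⟩ <;> simp [hlatp, hlongp]
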